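/- The Kleisli composition for the LTS monad is associative and unital: for any f : X → 𝒫(Σ_τ × Y), g : Y → 𝒫(Σ_τ × Z) and h : Z → 𝒫(Σ_τ × W) one has h·(g·f) = (h·g)·f, e_Y·f = f, and g·e_Y = g. -/
import Mathlib


-- Labels: `none` is the silent label τ, `some a` is a visible letter of Σ.

/-- Kleisli composition for the LTS monad `𝒫(Σ_τ × Id)`:
`(g·f)(x) = {(σ,z) | ∃ y, ((σ,y) ∈ f(x) ∧ (τ,z) ∈ g(y)) ∨ ((τ,y) ∈ f(x) ∧ (σ,z) ∈ g(y))}`. -/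
def kcomp {A X Y Z : Type*} (g : Y → Set (Option A × Z)) (f : X → Set (Option A × Y)) :
    X → Set (Option A × Z) :=
  fun x => {p | ∃ y, ((p.1, y) ∈ f x ∧ ((none : Option A), p.2) ∈ g y) ∨
                     (((none : Option A), y) ∈ f x ∧ (p.1, p.2) ∈ g y)}

/-- The unit of the LTS monad: `e_X(x) = {(τ,x)}`. -/
def kunit {A : Type*} (X : Type*) : X → Set (Option A × X) :=
  fun x => {((none : Option A), x)}

/-- The Kleisli composition for the LTS monad is associative and unital. -/
theorem lts_kleisli_assoc_and_unital {A X Y Z W : Type*}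
    (f : X → Set (Option A × Y)) (g : Y → Set (Option A × Z)) (h : Z → Set (Option A × W)) :
    kcomp h (kcomp g f) = kcomp (kcomp h g) f ∧
    kcomp (kunit Y) f = f ∧
    kcomp g (kunit Y) = g := by
  refine ⟨?_, ?_, ?_⟩
  · funext x
    ext ⟨σ, w⟩
    simp only [kcomp, Set.mem_setOf_eq]
    constructor
    · rintro ⟨z, ⟨⟨y, ⟨h1, h2⟩ | ⟨h1, h2⟩⟩, h3⟩ | ⟨⟨y, ⟨h1, h2⟩ | ⟨h1, h2⟩⟩, h3⟩⟩
      · exact ⟨y, Or.inl ⟨h1, z, Or.inl ⟨h2, h3⟩⟩⟩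
      · exact ⟨y, Or.inr ⟨h1, z, Or.inl ⟨h2, h3⟩⟩⟩
      · exact ⟨y, Or.inr ⟨h1, z, Or.inr ⟨h2, h3⟩⟩⟩
      · exact ⟨y, Or.inr ⟨h1, z, Or.inr ⟨h2, h3⟩⟩⟩
    · rintro ⟨y, ⟨h1, z, ⟨h2, h3⟩ | ⟨h2, h3⟩⟩ | ⟨h1, z, ⟨h2, h3⟩ | ⟨h2, h3⟩⟩⟩
      · exact ⟨z, Or.inl ⟨⟨y, Or.inl ⟨h1, h2⟩⟩, h3⟩⟩
      · exact ⟨z, Or.inl ⟨⟨y, Or.inl ⟨h1, h2⟩⟩, h3⟩⟩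
      · exact ⟨z, Or.inl ⟨⟨y, Or.inr ⟨h1, h2⟩⟩, h3⟩⟩
      · exact ⟨z, Or.inr ⟨⟨y, Or.inl ⟨h1, h2⟩⟩, h3⟩⟩
  · funext x
    ext ⟨σ, w⟩
    simp only [kcomp, kunit, Set.mem_setOf_eq, Set.mem_singleton_iff, Prod.mk.injEq]
    constructor
    · rintro ⟨y, ⟨h1, _, h2⟩ | ⟨h1, h2, h3⟩⟩
      · exact h2 ▸ h1
      · exact h2 ▸ h3 ▸ h1
    · intro hm
      exact ⟨w, Or.inl ⟨hm, trivial, rfl⟩⟩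
  · funext y
    ext ⟨σ, w⟩
    simp only [kcomp, kunit, Set.mem_setOf_eq, Set.mem_singleton_iff, Prod.mk.injEq]
    constructor
    · rintro ⟨y', ⟨⟨rfl, rfl⟩, h3⟩ | ⟨⟨-, rfl⟩, h3⟩⟩
      · exact h3
      · exact h3
    · intro hm
      exact ⟨y, Or.inr ⟨⟨trivial, rfl⟩, hm⟩⟩
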